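/- A regular language L is star-free if and only if the minimal deterministic automaton M recognizing L has no powered circuits, where a powered circuit is a circuit through a state σ labelled by a word v^k with v nonempty and k > 1 such that the state reached from σ by reading v differs from the state reached from σ by reading v². -/

import Mathlib

/-- Star-free languages over an alphabet `A`: the closure of the finite
languages under concatenation, union, intersection, and complementation. -/
inductive StarFree {A : Type*} : Language A → Prop
  | finite (L : Language A) : L.Finite → StarFree L
  | concat (L₁ L₂ : Language A) : StarFree L₁ → StarFree L₂ → StarFree (L₁ * L₂)
  | union (L₁ L₂ : Language A) : StarFree L₁ → StarFree L₂ → StarFree (L₁ ⊔ L₂)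
  | inter (L₁ L₂ : Language A) : StarFree L₁ → StarFree L₂ → StarFree (L₁ ⊓ L₂)
  | compl (L : Language A) : StarFree L → StarFree Lᶜ

/-- `wpow v n` is the word `v` concatenated with itself `n` times. -/
def wpow {A : Type*} (v : List A) : ℕ → List A
  | 0 => []
  | n + 1 => v ++ wpow v n

namespace SFaux
variable {A : Type*}

theorem wpow_add (v : List A) (m n : ℕ) : wpow v (m + n) = wpow v m ++ wpow v n := by
  induction m with
  | zero => simp [wpow]
  | succ m ih => rw [Nat.succ_add]; simp [wpow, ih]

theorem wpow_one (v : List A) : wpow v 1 = v := by simp [wpow]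

theorem wpow_succ' (v : List A) (n : ℕ) : wpow v (n + 1) = wpow v n ++ v := by
  rw [wpow_add, wpow_one]

theorem wpow_length (v : List A) (n : ℕ) : (wpow v n).length = n * v.length := by
  induction n with
  | zero => simp [wpow]
  | succ n ih => simp [wpow, ih, Nat.succ_mul]; ring

theorem wpow_nil (n : ℕ) : wpow ([] : List A) n = [] := by
  induction n with
  | zero => rfl
  | succ n ih => simp [wpow, ih]

theorem sf_empty : StarFree (⊥ : Language A) :=
  StarFree.finite ⊥ (Set.finite_empty)

theorem sf_top : StarFree (⊤ : Language A) := by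
  have h : StarFree ((⊥ : Language A)ᶜ) := StarFree.compl _ sf_empty
  rwa [compl_bot] at h

theorem sf_singleton (x : List A) : StarFree ({x} : Language A) :=
  StarFree.finite _ (Set.finite_singleton x)

theorem sf_sdiff {L₁ L₂ : Language A} (h₁ : StarFree L₁) (h₂ : StarFree L₂) :
    StarFree (L₁ \ L₂) :=
  StarFree.inter _ _ h₁ (StarFree.compl _ h₂)

theorem sf_biUnion {ι : Type*} (s : Finset ι) (f : ι → Language A)
    (h : ∀ i ∈ s, StarFree (f i)) : StarFree (⋃ i ∈ s, f i) := by
  classical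
  induction s using Finset.induction_on with
  | empty =>
    have e : (⋃ i ∈ (∅ : Finset ι), f i) = (⊥ : Language A) :=
      Set.iUnion_eq_empty.2 fun i => Set.iUnion_eq_empty.2 fun hi => absurd hi (Finset.notMem_empty i)
    exact e ▸ sf_empty
  | insert a s hni ih =>
    erw [Finset.set_biUnion_insert]
    exact StarFree.union _ _ (h a (Finset.mem_insert_self a s))
      (ih fun i hi => h i (Finset.mem_insert_of_mem hi))

theorem sf_iUnion {ι : Type*} [Fintype ι] (f : ι → Language A)
    (h : ∀ i, StarFree (f i)) : StarFree (⋃ i, f i) := by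
  have : (⋃ i, f i) = ⋃ i ∈ Finset.univ, f i := by
    exact Set.iUnion_congr fun i => (iSup_pos (α := Set (List A)) (f := fun _ : i ∈ Finset.univ => f i) (Finset.mem_univ i)).symm
  rw [this]
  exact sf_biUnion _ _ fun i _ => h i

end SFaux
namespace SFaux
variable {A : Type*}

def Ap (L : Language A) (N : ℕ) : Prop :=
  ∀ n, N ≤ n → ∀ u v w : List A,
    (u ++ wpow v n ++ w ∈ L ↔ u ++ wpow v (n + 1) ++ w ∈ L)

theorem split_wpow (v : List A) :
    ∀ (n : ℕ) (r s : List A), r ++ s = wpow v n →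
      (r = wpow v n ∧ s = []) ∨
      ∃ i j, i < n ∧ j ≤ v.length ∧ r = wpow v i ++ v.take j ∧
        s = v.drop j ++ wpow v (n - (i + 1)) := by
  intro n
  induction n with
  | zero =>
    intro r s h
    simp only [wpow] at h
    rcases List.append_eq_nil_iff.mp h with ⟨hr, hs⟩
    exact Or.inl ⟨by simp [hr, wpow], hs⟩
  | succ n ih =>
    intro r s h
    simp only [wpow] at h
    rcases List.append_eq_append_iff.mp h with ⟨t, hv, hs⟩ | ⟨t, hr, hw⟩
    · refine Or.inr ⟨0, r.length, Nat.succ_pos n, ?_, ?_, ?_⟩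
      · rw [hv]; simp
      · simp only [wpow, List.nil_append]
        rw [hv, List.take_left]
      · rw [hs, hv, List.drop_left]
        simp
    · rcases ih t s hw.symm with ⟨ht, hs⟩ | ⟨i, j, hi, hj, ht, hs⟩
      · left
        constructor
        · rw [hr, ht]; rfl
        · exact hs
      · right
        refine ⟨i + 1, j, by omega, hj, ?_, ?_⟩
        · rw [hr, ht]; simp [wpow]
        · rw [hs]; congr 2; omega

theorem recomb_eq (u w v : List A) (i b j n : ℕ) (h : i + 1 + b = n) :
    u ++ (wpow v i ++ (v.take j ++ (v.drop j ++ (wpow v b ++ w)))) = u ++ (wpow v n ++ w) := by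
  subst h
  congr 1
  rw [show i + 1 + b = i + (b + 1) by omega, wpow_add, List.append_assoc]
  congr 1
  show v.take j ++ (v.drop j ++ (wpow v b ++ w)) = (v ++ wpow v b) ++ w
  rw [← List.append_assoc, List.take_append_drop, List.append_assoc]

theorem ap_concat {L₁ L₂ : Language A} {N₁ N₂ : ℕ}
    (h₁ : Ap L₁ N₁) (h₂ : Ap L₂ N₂) : Ap (L₁ * L₂) (N₁ + N₂ + 2) := by
  intro n hn u v w
  rcases eq_or_ne v [] with rfl | hv
  · simp [wpow_nil]
  constructor
  · rintro hx
    rcases Language.mem_mul.mp hx with ⟨x₁, hx₁, x₂, hx₂, hcat⟩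
    rw [List.append_assoc] at hcat
    rcases List.append_eq_append_iff.mp hcat with ⟨t, hu, hx2⟩ | ⟨t, hx1, hrest⟩
    · -- split in u : u = x₁ ++ t, x₂ = t ++ (wpow v n ++ w)
      have hmem : t ++ wpow v n ++ w ∈ L₂ := by
        rw [List.append_assoc]; exact hx2 ▸ hx₂
      have hx₂' : t ++ wpow v (n+1) ++ w ∈ L₂ := (h₂ n (by omega) t v w).mp hmem
      refine Language.mem_mul.mpr ⟨x₁, hx₁, _, hx₂', ?_⟩
      rw [hu]; simp [List.append_assoc]
    · -- x₁ = u ++ t, wpow v n ++ w = t ++ x₂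
      rcases List.append_eq_append_iff.mp hrest with ⟨t', h1, h2⟩ | ⟨t', h3, h4⟩
      · -- t = wpow v n ++ t', w = t' ++ x₂ : split in w
        have hmem : u ++ wpow v n ++ t' ∈ L₁ := by
          have : x₁ = u ++ wpow v n ++ t' := by rw [hx1, h1]; simp [List.append_assoc]
          exact this ▸ hx₁
        have hx₁' : u ++ wpow v (n+1) ++ t' ∈ L₁ := (h₁ n (by omega) u v t').mp hmem
        refine Language.mem_mul.mpr ⟨_, hx₁', x₂, hx₂, ?_⟩
        rw [h2]; simp [List.append_assoc]
      · -- wpow v n = t ++ t', x₂ = t' ++ w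
        rcases split_wpow v n t t' h3.symm with ⟨ht, ht'⟩ | ⟨i, j, hi, hj, ht, ht'⟩
        · -- t = wpow v n, t' = []
          have hmem : u ++ wpow v n ++ [] ∈ L₁ := by
            have : x₁ = u ++ wpow v n ++ [] := by rw [hx1, ht]; simp
            exact this ▸ hx₁
          have hx₁' : u ++ wpow v (n+1) ++ [] ∈ L₁ := (h₁ n (by omega) u v []).mp hmem
          refine Language.mem_mul.mpr ⟨_, hx₁', x₂, hx₂, ?_⟩
          rw [h4, ht']; simp
        · have hx1' : x₁ = (u ++ wpow v i) ++ v.take j := by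
            rw [hx1, ht]; simp [List.append_assoc]
          have hx2' : x₂ = v.drop j ++ wpow v (n - (i+1)) ++ w := by
            rw [h4, ht']
          by_cases hiN : N₁ ≤ i
          · have hmem : u ++ wpow v i ++ v.take j ∈ L₁ := hx1' ▸ hx₁
            have hx₁' : u ++ wpow v (i+1) ++ v.take j ∈ L₁ := (h₁ i hiN u v _).mp hmem
            refine Language.mem_mul.mpr ⟨_, hx₁', x₂, hx₂, ?_⟩
            rw [hx2']
            simp only [List.append_assoc]
            exact recomb_eq u w v (i+1) (n - (i+1)) j (n+1) (by omega)
          · have hn2 : N₂ ≤ n - (i+1) := by omega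
            have hmem : v.drop j ++ wpow v (n - (i+1)) ++ w ∈ L₂ := hx2' ▸ hx₂
            have hx₂' : v.drop j ++ wpow v (n - (i+1) + 1) ++ w ∈ L₂ :=
              (h₂ _ hn2 _ v w).mp hmem
            refine Language.mem_mul.mpr ⟨x₁, hx₁, _, hx₂', ?_⟩
            rw [hx1']
            simp only [List.append_assoc]
            exact recomb_eq u w v i (n - (i+1) + 1) j (n+1) (by omega)
  · rintro hx
    rcases Language.mem_mul.mp hx with ⟨x₁, hx₁, x₂, hx₂, hcat⟩
    rw [List.append_assoc] at hcat
    rcases List.append_eq_append_iff.mp hcat with ⟨t, hu, hx2⟩ | ⟨t, hx1, hrest⟩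
    · have hmem : t ++ wpow v (n+1) ++ w ∈ L₂ := by
        rw [List.append_assoc]; exact hx2 ▸ hx₂
      have hx₂' : t ++ wpow v n ++ w ∈ L₂ := (h₂ n (by omega) t v w).mpr hmem
      refine Language.mem_mul.mpr ⟨x₁, hx₁, _, hx₂', ?_⟩
      rw [hu]; simp [List.append_assoc]
    · rcases List.append_eq_append_iff.mp hrest with ⟨t', h1, h2⟩ | ⟨t', h3, h4⟩
      · have hmem : u ++ wpow v (n+1) ++ t' ∈ L₁ := by
          have : x₁ = u ++ wpow v (n+1) ++ t' := by rw [hx1, h1]; simp [List.append_assoc]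
          exact this ▸ hx₁
        have hx₁' : u ++ wpow v n ++ t' ∈ L₁ := (h₁ n (by omega) u v t').mpr hmem
        refine Language.mem_mul.mpr ⟨_, hx₁', x₂, hx₂, ?_⟩
        rw [h2]; simp [List.append_assoc]
      · rcases split_wpow v (n+1) t t' h3.symm with ⟨ht, ht'⟩ | ⟨i, j, hi, hj, ht, ht'⟩
        · have hmem : u ++ wpow v (n+1) ++ [] ∈ L₁ := by
            have : x₁ = u ++ wpow v (n+1) ++ [] := by rw [hx1, ht]; simp
            exact this ▸ hx₁
          have hx₁' : u ++ wpow v n ++ [] ∈ L₁ := (h₁ n (by omega) u v []).mpr hmem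
          refine Language.mem_mul.mpr ⟨_, hx₁', x₂, hx₂, ?_⟩
          rw [h4, ht']; simp
        · have hx1' : x₁ = (u ++ wpow v i) ++ v.take j := by
            rw [hx1, ht]; simp [List.append_assoc]
          have hx2' : x₂ = v.drop j ++ wpow v (n + 1 - (i+1)) ++ w := by
            rw [h4, ht']
          by_cases hiN : N₁ + 1 ≤ i
          · have hmem : u ++ wpow v (i - 1 + 1) ++ v.take j ∈ L₁ := by
              rw [show i - 1 + 1 = i by omega]
              exact hx1' ▸ hx₁
            have hx₁' : u ++ wpow v (i-1) ++ v.take j ∈ L₁ :=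
              (h₁ (i-1) (by omega) u v _).mpr hmem
            refine Language.mem_mul.mpr ⟨_, hx₁', x₂, hx₂, ?_⟩
            rw [hx2']
            simp only [List.append_assoc]
            exact recomb_eq u w v (i-1) (n + 1 - (i+1)) j n (by omega)
          · have hn2 : N₂ ≤ n + 1 - (i+1) - 1 := by omega
            have hmem : v.drop j ++ wpow v (n + 1 - (i+1) - 1 + 1) ++ w ∈ L₂ := by
              rw [show n + 1 - (i+1) - 1 + 1 = n + 1 - (i+1) by omega]
              exact hx2' ▸ hx₂
            have hx₂' : v.drop j ++ wpow v (n + 1 - (i+1) - 1) ++ w ∈ L₂ :=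
              (h₂ _ hn2 _ v w).mpr hmem
            refine Language.mem_mul.mpr ⟨x₁, hx₁, _, hx₂', ?_⟩
            rw [hx1']
            simp only [List.append_assoc]
            exact recomb_eq u w v i (n + 1 - (i+1) - 1) j n (by omega)

theorem starFree_ap {L : Language A} (h : StarFree L) : ∃ N, Ap L N := by
  induction h with
  | finite L hL =>
    have : BddAbove (List.length '' (L : Set (List A))) := (hL.image _).bddAbove
    rcases this with ⟨N, hN⟩
    refine ⟨N + 1, ?_⟩
    intro n hn u v w
    rcases eq_or_ne v [] with rfl | hv
    · simp [wpow_nil]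
    have hlen : ∀ m, n ≤ m → u ++ wpow v m ++ w ∉ L := by
      intro m hm hmem
      have : (u ++ wpow v m ++ w).length ≤ N := hN ⟨_, hmem, rfl⟩
      have hv1 : 1 ≤ v.length := List.length_pos_iff.mpr hv
      simp only [List.length_append, wpow_length] at this
      nlinarith
    constructor
    · intro hmem; exact absurd hmem (hlen n le_rfl)
    · intro hmem; exact absurd hmem (hlen (n+1) (by omega))
  | concat L₁ L₂ h₁ h₂ ih₁ ih₂ =>
    rcases ih₁ with ⟨N₁, hN₁⟩; rcases ih₂ with ⟨N₂, hN₂⟩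
    exact ⟨N₁ + N₂ + 2, ap_concat hN₁ hN₂⟩
  | union L₁ L₂ h₁ h₂ ih₁ ih₂ =>
    rcases ih₁ with ⟨N₁, hN₁⟩; rcases ih₂ with ⟨N₂, hN₂⟩
    refine ⟨max N₁ N₂, fun n hn u v w => ?_⟩
    have e₁ := hN₁ n (le_trans (le_max_left _ _) hn) u v w
    have e₂ := hN₂ n (le_trans (le_max_right _ _) hn) u v w
    constructor
    · rintro (h | h)
      · exact Or.inl (e₁.mp h)
      · exact Or.inr (e₂.mp h)
    · rintro (h | h)
      · exact Or.inl (e₁.mpr h)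
      · exact Or.inr (e₂.mpr h)
  | inter L₁ L₂ h₁ h₂ ih₁ ih₂ =>
    rcases ih₁ with ⟨N₁, hN₁⟩; rcases ih₂ with ⟨N₂, hN₂⟩
    refine ⟨max N₁ N₂, fun n hn u v w => ?_⟩
    have e₁ := hN₁ n (le_trans (le_max_left _ _) hn) u v w
    have e₂ := hN₂ n (le_trans (le_max_right _ _) hn) u v w
    exact and_congr e₁ e₂
  | compl L h ih =>
    rcases ih with ⟨N, hN⟩
    exact ⟨N, fun n hn u v w => not_congr (hN n hn u v w)⟩

end SFaux

namespace SFaux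
variable {A σ : Type*} [Fintype A] [Fintype σ]

theorem evalFrom_wpow_cycle (M : DFA A σ) (s : σ) (v : List A) (k : ℕ)
    (hc : M.evalFrom s (wpow v k) = s) :
    ∀ m j, M.evalFrom s (wpow v (j + m * k)) = M.evalFrom s (wpow v j) := by
  intro m
  induction m with
  | zero => simp
  | succ m ih =>
    intro j
    rw [show j + (m + 1) * k = k + (j + m * k) by ring, wpow_add,
      DFA.evalFrom_of_append, hc, ih j]

theorem part1 (M : DFA A σ) (L : Language A) (hacc : M.accepts = L)
    (hreach : ∀ s : σ, ∃ w : List A, M.evalFrom M.start w = s)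
    (hmin : ∀ s t : σ,
      (∀ w : List A, M.evalFrom s w ∈ M.accept ↔ M.evalFrom t w ∈ M.accept) → s = t)
    (hSF : StarFree L) :
    ¬ ∃ (s : σ) (v : List A) (k : ℕ), v ≠ [] ∧ 1 < k ∧
        M.evalFrom s (wpow v k) = s ∧
        M.evalFrom s v ≠ M.evalFrom s (wpow v 2) := by
  rcases starFree_ap hSF with ⟨N, hAp⟩
  rintro ⟨s, v, k, hv, hk, hcirc, hne⟩
  obtain ⟨u, hu⟩ := hreach s
  have hdist : ∃ w, ¬(M.evalFrom (M.evalFrom s v) w ∈ M.accept ↔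
      M.evalFrom (M.evalFrom s (wpow v 2)) w ∈ M.accept) := by
    by_contra h
    push_neg at h
    exact hne (hmin _ _ h)
  obtain ⟨w, hw⟩ := hdist
  have hmem : ∀ j, (u ++ wpow v j ++ w ∈ L ↔
      M.evalFrom (M.evalFrom s (wpow v j)) w ∈ M.accept) := by
    intro j
    rw [← hacc, DFA.mem_accepts]
    have : M.eval (u ++ wpow v j ++ w) =
        M.evalFrom (M.evalFrom s (wpow v j)) w := by
      show M.evalFrom M.start _ = _
      rw [DFA.evalFrom_of_append, DFA.evalFrom_of_append, hu]
    rw [this]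
  have hN : N ≤ 1 + N * k := by
    have : N * 1 ≤ N * k := Nat.mul_le_mul_left N (by omega)
    omega
  have key := hAp (1 + N * k) hN u v w
  rw [hmem, hmem] at key
  rw [evalFrom_wpow_cycle M s v k hcirc N 1] at key
  rw [show 1 + N * k + 1 = 2 + N * k by omega,
    evalFrom_wpow_cycle M s v k hcirc N 2] at key
  rw [wpow_one] at key
  exact hw key

end SFaux

namespace SFaux
variable {A σ : Type*}

/-- The transition function of a word. -/
def tr (M : DFA A σ) (v : List A) : σ → σ := fun s => M.evalFrom s v

theorem tr_nil (M : DFA A σ) : tr M [] = id := rfl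

theorem tr_append (M : DFA A σ) (u v : List A) :
    tr M (u ++ v) = tr M v ∘ tr M u := by
  funext s
  exact M.evalFrom_of_append s u v

theorem tr_append3 (M : DFA A σ) (x y z : List A) :
    tr M (x ++ y ++ z) = tr M z ∘ tr M y ∘ tr M x := by
  rw [tr_append, tr_append]

theorem tr_wpow (M : DFA A σ) (v : List A) (k : ℕ) :
    tr M (wpow v k) = (tr M v)^[k] := by
  induction k with
  | zero => rfl
  | succ k ih =>
    show tr M (v ++ wpow v k) = _
    rw [tr_append, ih, ← Function.iterate_succ]

section
variable [Fintype σ] (M : DFA A σ)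

/-- The no-powered-circuit hypothesis. -/
def NPC : Prop :=
  ¬ ∃ (s : σ) (v : List A) (k : ℕ), v ≠ [] ∧ 1 < k ∧
      M.evalFrom s (wpow v k) = s ∧ M.evalFrom s v ≠ M.evalFrom s (wpow v 2)

variable {M}

theorem fix_of_periodic (hnc : NPC M) {v : List A} {s : σ} {k : ℕ} (hk : 1 ≤ k)
    (h : (tr M v)^[k] s = s) : tr M v s = s := by
  rcases eq_or_ne v [] with rfl | hv
  · rfl
  rcases eq_or_lt_of_le hk with rfl | hk2
  · simpa using h
  · -- k ≥ 2
    rw [NPC, not_exists] at hnc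
    have h2 := hnc s
    rw [not_exists] at h2
    have h3 := h2 v
    rw [not_exists] at h3
    have h4 := h3 k
    push_neg at h4
    have hcirc : M.evalFrom s (wpow v k) = s := by
      rw [show M.evalFrom s (wpow v k) = tr M (wpow v k) s from rfl, tr_wpow]; exact h
    have heq := h4 hv hk2 hcirc
    -- heq : evalFrom s v = evalFrom s (wpow v 2), i.e. f s = f² s
    have hff : tr M v s = tr M v (tr M v s) := by
      have : M.evalFrom s (wpow v 2) = (tr M v)^[2] s := by
        rw [show M.evalFrom s (wpow v 2) = tr M (wpow v 2) s from rfl, tr_wpow]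
      rw [this] at heq
      exact heq
    have hall : ∀ j, 1 ≤ j → (tr M v)^[j] s = tr M v s := by
      intro j hj
      induction j with
      | zero => omega
      | succ j ih =>
        rcases Nat.eq_or_lt_of_le hj with h' | h'
        · simp [← h']
        · have hj1 : 1 ≤ j := by omega
          rw [Function.iterate_succ_apply', ih hj1, ← hff]
    calc tr M v s = (tr M v)^[k] s := (hall k hk).symm
      _ = s := h

theorem aperiodic (hnc : NPC M) (v : List A) :
    tr M (wpow v (Fintype.card σ)) = tr M (wpow v (Fintype.card σ + 1)) := by
  set N := Fintype.card σ with hN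
  rw [tr_wpow, tr_wpow]
  funext s
  set f := tr M v
  -- pigeonhole on s, f s, ..., f^[N] s
  obtain ⟨i, j, hne, hij⟩ := Fintype.exists_ne_map_eq_of_card_lt
    (fun t : Fin (N + 1) => f^[(t : ℕ)] s) (by simp [hN])
  wlog hlt : (i : ℕ) < (j : ℕ) generalizing i j
  · exact this j i hne.symm hij.symm (by omega)
  have hper : f^[(j : ℕ) - i] (f^[(i : ℕ)] s) = f^[(i : ℕ)] s := by
    rw [← Function.iterate_add_apply, Nat.sub_add_cancel hlt.le]
    exact hij.symm
  have hfix : f (f^[(i : ℕ)] s) = f^[(i : ℕ)] s :=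
    fix_of_periodic hnc (by omega) hper
  have hstab : ∀ n, (i : ℕ) ≤ n → f^[n] s = f^[(i : ℕ)] s := by
    intro n hn
    induction n with
    | zero => simp [Nat.le_zero.mp hn]
    | succ n ih =>
      rcases Nat.eq_or_lt_of_le hn with h' | h'
      · rw [← h']
      · have : (i : ℕ) ≤ n := by omega
        rw [Function.iterate_succ_apply', ih this, hfix]
  have hiN : (i : ℕ) ≤ N := by omega
  rw [hstab N hiN, hstab (N + 1) (by omega)]

/-! Green-type relations on transition functions. -/

def Rle (x y : σ → σ) : Prop := ∃ q : List A, x = tr M q ∘ y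
def Lle (x y : σ → σ) : Prop := ∃ p : List A, x = y ∘ tr M p
def Jle (x y : σ → σ) : Prop := ∃ p q : List A, x = tr M q ∘ y ∘ tr M p
def inT (x : σ → σ) : Prop := ∃ u : List A, tr M u = x

variable (M)
theorem Rle_refl (x : σ → σ) : Rle (M := M) x x := ⟨[], by rw [tr_nil]; rfl⟩
theorem Lle_refl (x : σ → σ) : Lle (M := M) x x := ⟨[], by rw [tr_nil]; rfl⟩
theorem Jle_refl (x : σ → σ) : Jle (M := M) x x :=
  ⟨[], [], by rw [tr_nil]; rfl⟩
variable {M}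

theorem Jle_trans {x y z : σ → σ} (h₁ : Jle (M := M) x y) (h₂ : Jle (M := M) y z) :
    Jle (M := M) x z := by
  obtain ⟨p, q, rfl⟩ := h₁
  obtain ⟨p', q', rfl⟩ := h₂
  exact ⟨p ++ p', q' ++ q, by funext s; simp [tr_append, Function.comp]⟩

theorem Rle.jle {x y : σ → σ} (h : Rle (M := M) x y) : Jle (M := M) x y := by
  obtain ⟨q, rfl⟩ := h
  exact ⟨[], q, by rw [tr_nil]; rfl⟩

theorem Lle.jle {x y : σ → σ} (h : Lle (M := M) x y) : Jle (M := M) x y := by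
  obtain ⟨p, rfl⟩ := h
  exact ⟨p, [], by rw [tr_nil]; rfl⟩

/-- Key aperiodicity ("sandwich") lemma : if `y = q ∘ y ∘ p` then already
`y = y ∘ p` and `y = q ∘ y`. -/
theorem sandwich (hnc : NPC M) {y : σ → σ} {p q : List A}
    (h : y = tr M q ∘ y ∘ tr M p) :
    y = y ∘ tr M p ∧ y = tr M q ∘ y := by
  have hpow : ∀ k, y = tr M (wpow q k) ∘ y ∘ tr M (wpow p k) := by
    intro k
    induction k with
    | zero => simpa [wpow, tr_nil] using rfl
    | succ k ih =>
      calc y = tr M q ∘ y ∘ tr M p := h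
        _ = tr M q ∘ (tr M (wpow q k) ∘ y ∘ tr M (wpow p k)) ∘ tr M p := by rw [← ih]
        _ = (tr M q ∘ tr M (wpow q k)) ∘ y ∘ (tr M (wpow p k) ∘ tr M p) := by rfl
        _ = tr M (wpow q (k+1)) ∘ y ∘ tr M (wpow p (k+1)) := by
            rw [wpow_succ' q, tr_append, show wpow p (k+1) = p ++ wpow p k from rfl,
              tr_append]
  set N := Fintype.card σ
  constructor
  · calc y = y ∘ id := rfl
      _ = y ∘ tr M p := by
        conv_lhs => rw [hpow N]
        conv_rhs => rw [hpow N]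
        have : tr M (wpow p N) = tr M (wpow p N) ∘ tr M p := by
          have h1 := aperiodic hnc p
          rw [show wpow p (N+1) = p ++ wpow p N from rfl, tr_append] at h1
          simpa using h1
        rw [show (tr M (wpow q N) ∘ y ∘ tr M (wpow p N)) ∘ tr M p
            = tr M (wpow q N) ∘ y ∘ (tr M (wpow p N) ∘ tr M p) from rfl, ← this]
        simp
  · calc y = id ∘ y := rfl
      _ = tr M q ∘ y := by
        conv_lhs => rw [hpow N]
        conv_rhs => rw [hpow N]
        have : tr M (wpow q N) = tr M q ∘ tr M (wpow q N) := by
          have h1 := aperiodic hnc q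
          rw [wpow_succ' q, tr_append] at h1
          simpa using h1
        rw [show tr M q ∘ (tr M (wpow q N) ∘ y ∘ tr M (wpow p N))
            = (tr M q ∘ tr M (wpow q N)) ∘ y ∘ tr M (wpow p N) from rfl, ← this]
        simp

theorem R_lemma (hnc : NPC M) {x y : σ → σ} (h₁ : Rle (M := M) x y)
    (h₂ : Jle (M := M) y x) : Rle (M := M) y x := by
  obtain ⟨c, rfl⟩ := h₁
  obtain ⟨d, e, he⟩ := h₂
  have hs : y = tr M (c ++ e) ∘ y ∘ tr M d := by
    rw [tr_append]
    calc y = tr M e ∘ (tr M c ∘ y) ∘ tr M d := he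
      _ = (tr M e ∘ tr M c) ∘ y ∘ tr M d := rfl
  have := (sandwich hnc hs).2
  refine ⟨e, ?_⟩
  calc y = tr M (c ++ e) ∘ y := this
    _ = tr M e ∘ (tr M c ∘ y) := by rw [tr_append]; rfl

theorem L_lemma (hnc : NPC M) {x y : σ → σ} (h₁ : Lle (M := M) x y)
    (h₂ : Jle (M := M) y x) : Lle (M := M) y x := by
  obtain ⟨c, rfl⟩ := h₁
  obtain ⟨d, e, he⟩ := h₂
  have hs : y = tr M e ∘ y ∘ tr M (d ++ c) := by
    rw [tr_append]
    calc y = tr M e ∘ (y ∘ tr M c) ∘ tr M d := he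
      _ = tr M e ∘ y ∘ (tr M c ∘ tr M d) := rfl
  have := (sandwich hnc hs).1
  refine ⟨d, ?_⟩
  calc y = y ∘ tr M (d ++ c) := this
    _ = (y ∘ tr M c) ∘ tr M d := by rw [tr_append]; rfl

/-- If a word is a factor of a word acting as the identity then it acts as the
identity. -/
theorem sandwich_id (hnc : NPC M) {p v q : List A}
    (h : tr M (p ++ v ++ q) = id) : tr M v = id := by
  rw [tr_append3] at h
  have hinj : Function.Injective (tr M q ∘ tr M v ∘ tr M p) := by
    rw [h]; exact fun a b hab => hab
  have hinjvp : Function.Injective (tr M v ∘ tr M p) := hinj.of_comp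
  have hinjp : Function.Injective (tr M p) := hinjvp.of_comp
  have hsurjp : Function.Surjective (tr M p) :=
    (Finite.injective_iff_surjective).mp hinjp
  have hinjv : Function.Injective (tr M v) := by
    intro a b hab
    obtain ⟨a', rfl⟩ := hsurjp a
    obtain ⟨b', rfl⟩ := hsurjp b
    exact congrArg _ (hinjvp hab)
  have hsurjv : Function.Surjective (tr M v) :=
    (Finite.injective_iff_surjective).mp hinjv
  have hap := aperiodic hnc v
  rw [tr_wpow, tr_wpow, Function.iterate_succ'] at hap
  funext s
  obtain ⟨t, ht⟩ := (hsurjv.iterate (Fintype.card σ)) s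
  have : tr M v ((tr M v)^[Fintype.card σ] t) = (tr M v)^[Fintype.card σ] t := by
    conv_rhs => rw [hap]
    rfl
  rw [ht] at this
  exact this

end
end SFaux

namespace SFaux
variable {A σ : Type*}

/-! Building-block languages. -/

def LC (c : A) : Language A := ⊤ * ({[c]} * ⊤)
def LU (L : Language A) (a : A) : Language A := L * ({[a]} * ⊤)
def LV (a : A) (L : Language A) : Language A := ⊤ * ({[a]} * L)
def LW (a : A) (L : Language A) (b : A) : Language A := ⊤ * ({[a]} * (L * ({[b]} * ⊤)))

theorem mem_LC {c : A} {w : List A} : w ∈ LC c ↔ ∃ x y, w = x ++ [c] ++ y := by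
  constructor
  · rintro ⟨x, hx, r, ⟨m, hm, y, hy, rfl⟩, rfl⟩
    erw [Set.mem_singleton_iff] at hm
    exact ⟨x, y, by rw [hm, List.append_assoc]⟩
  · rintro ⟨x, y, rfl⟩
    exact ⟨x, trivial, [c] ++ y, ⟨[c], rfl, y, trivial, rfl⟩, by rw [List.append_assoc]⟩

theorem mem_LU {L : Language A} {a : A} {w : List A} :
    w ∈ LU L a ↔ ∃ x y, x ∈ L ∧ w = x ++ [a] ++ y := by
  constructor
  · rintro ⟨x, hx, r, ⟨m, hm, y, hy, rfl⟩, rfl⟩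
    erw [Set.mem_singleton_iff] at hm
    exact ⟨x, y, hx, by rw [hm, List.append_assoc]⟩
  · rintro ⟨x, y, hx, rfl⟩
    exact ⟨x, hx, [a] ++ y, ⟨[a], rfl, y, trivial, rfl⟩, by rw [List.append_assoc]⟩

theorem mem_LV {L : Language A} {a : A} {w : List A} :
    w ∈ LV a L ↔ ∃ x y, y ∈ L ∧ w = x ++ [a] ++ y := by
  constructor
  · rintro ⟨x, hx, r, ⟨m, hm, y, hy, rfl⟩, rfl⟩
    erw [Set.mem_singleton_iff] at hm
    exact ⟨x, y, hy, by rw [hm, List.append_assoc]⟩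
  · rintro ⟨x, y, hy, rfl⟩
    exact ⟨x, trivial, [a] ++ y, ⟨[a], rfl, y, hy, rfl⟩, by rw [List.append_assoc]⟩

theorem mem_LW {L : Language A} {a b : A} {w : List A} :
    w ∈ LW a L b ↔ ∃ x m y, m ∈ L ∧ w = x ++ [a] ++ m ++ [b] ++ y := by
  constructor
  · rintro ⟨x, hx, r, ⟨sa, hsa, r', ⟨m, hm, r'', ⟨sb, hsb, y, hy, rfl⟩, rfl⟩, rfl⟩, rfl⟩
    erw [Set.mem_singleton_iff] at hsa hsb
    refine ⟨x, m, y, hm, ?_⟩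
    rw [hsa, hsb]
    simp [List.append_assoc]
  · rintro ⟨x, m, y, hm, rfl⟩
    refine ⟨x, trivial, [a] ++ (m ++ ([b] ++ y)),
      ⟨[a], rfl, m ++ ([b] ++ y), ⟨m, hm, [b] ++ y, ⟨[b], rfl, y, trivial, rfl⟩, rfl⟩, rfl⟩, ?_⟩
    simp [List.append_assoc]

theorem sf_LC (c : A) : StarFree (LC c) :=
  StarFree.concat _ _ sf_top (StarFree.concat _ _ (sf_singleton _) sf_top)

theorem sf_LU {L : Language A} (h : StarFree L) (a : A) : StarFree (LU L a) :=
  StarFree.concat _ _ h (StarFree.concat _ _ (sf_singleton _) sf_top)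

theorem sf_LV (a : A) {L : Language A} (h : StarFree L) : StarFree (LV a L) :=
  StarFree.concat _ _ sf_top (StarFree.concat _ _ (sf_singleton _) h)

theorem sf_LW (a : A) {L : Language A} (h : StarFree L) (b : A) : StarFree (LW a L b) :=
  StarFree.concat _ _ sf_top (StarFree.concat _ _ (sf_singleton _)
    (StarFree.concat _ _ h (StarFree.concat _ _ (sf_singleton _) sf_top)))

theorem mem_iUnion_ite {ι : Type*} (cond : ι → Prop) [DecidablePred cond]
    (f : ι → Language A) (w : List A) :
    (w ∈ ⋃ i, if cond i then f i else (⊥ : Language A)) ↔ ∃ i, cond i ∧ w ∈ f i := by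
  simp only [Set.mem_iUnion]
  constructor
  · rintro ⟨i, hi⟩
    by_cases h : cond i
    · erw [if_pos h] at hi; exact ⟨i, h, hi⟩
    · erw [if_neg h] at hi; exact absurd hi (Set.notMem_empty w)
  · rintro ⟨i, h, hw⟩
    exact ⟨i, by erw [if_pos h]; exact hw⟩

theorem sf_iUnion_ite {ι : Type*} [Fintype ι] (cond : ι → Prop) [DecidablePred cond]
    (f : ι → Language A) (h : ∀ i, cond i → StarFree (f i)) :
    StarFree (⋃ i, if cond i then f i else (⊥ : Language A)) := by
  apply sf_iUnion
  intro i
  by_cases hc : cond i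
  · erw [if_pos hc]; exact h i hc
  · erw [if_neg hc]; exact sf_empty

section
variable [Fintype A] [Fintype σ] {M : DFA A σ}

/-- Case A: the transition function of `u₀` is a factor of the identity. -/
theorem caseA (hnc : NPC M) (u₀ : List A)
    (hA : ∃ p q : List A, tr M (p ++ u₀ ++ q) = id) :
    StarFree {w : List A | tr M w = tr M u₀} := by
  classical
  obtain ⟨p, q, hpq⟩ := hA
  have hid : tr M u₀ = id := sandwich_id hnc hpq
  have heq : {w : List A | tr M w = tr M u₀} = {w : List A | ∀ a ∈ w, tr M [a] = id} := by
    ext w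
    simp only [Set.mem_setOf_eq, hid]
    constructor
    · intro hw a ha
      obtain ⟨s, t, rfl⟩ := List.append_of_mem ha
      apply sandwich_id hnc (p := s) (q := t)
      rw [show s ++ [a] ++ t = s ++ a :: t by simp]
      exact hw
    · intro h
      induction w with
      | nil => rfl
      | cons a w ih =>
        have : a :: w = [a] ++ w := rfl
        rw [this, tr_append, h a (by simp), ih fun b hb => h b (by simp [hb])]
        rfl
  rw [heq]
  have heq2 : {w : List A | ∀ a ∈ w, tr M [a] = id} =
      (⋃ c : A, if tr M [c] ≠ id then LC c else (⊥ : Language A))ᶜ := by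
    ext w
    simp only [Set.mem_compl_iff, Set.mem_setOf_eq]
    constructor
    · intro h hmem
      erw [mem_iUnion_ite] at hmem
      obtain ⟨c, hc, hw⟩ := hmem
      obtain ⟨x, y, rfl⟩ := mem_LC.mp hw
      exact hc (h c (by simp))
    · intro h a ha
      by_contra hne
      apply h
      erw [mem_iUnion_ite]
      obtain ⟨s, t, rfl⟩ := List.append_of_mem ha
      exact ⟨a, hne, mem_LC.mpr ⟨s, t, by simp⟩⟩
  rw [heq2]
  exact StarFree.compl _ (sf_iUnion_ite _ _ fun c _ => sf_LC c)
end

end SFaux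

namespace SFaux
variable {A σ : Type*} [Fintype A] [Fintype σ] {M : DFA A σ}

noncomputable def mu (M : DFA A σ) (u₀ : List A) : ℕ :=
  (Set.range (tr M) \ {x : σ → σ | Jle (M := M) x (tr M u₀)}).ncard

theorem mu_lt {u₀ u₁ : List A} (hJ : Jle (M := M) (tr M u₀) (tr M u₁))
    (hnJ : ¬ Jle (M := M) (tr M u₁) (tr M u₀)) : mu M u₁ < mu M u₀ := by
  apply Set.ncard_lt_ncard
  · constructor
    · rintro x ⟨hx1, hx2⟩
      refine ⟨hx1, fun hx3 => hx2 (Jle_trans hx3 hJ)⟩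
    · intro hsub
      have h1 : tr M u₁ ∈ Set.range (tr M) \ {x : σ → σ | Jle (M := M) x (tr M u₀)} :=
        ⟨⟨u₁, rfl⟩, hnJ⟩
      have h2 := hsub h1
      exact h2.2 (Jle_refl M _)
  · exact Set.toFinite _

/-- Conditions for the three kinds of pieces. -/
def condU (M : DFA A σ) (m n : σ → σ) (a : A) : Prop :=
  inT (M := M) n ∧ ¬ Rle (M := M) n m ∧ Rle (M := M) (tr M [a] ∘ n) m ∧
    Rle (M := M) m (tr M [a] ∘ n)

def condV (M : DFA A σ) (m : σ → σ) (a : A) (n : σ → σ) : Prop :=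
  inT (M := M) n ∧ ¬ Lle (M := M) n m ∧ Lle (M := M) (n ∘ tr M [a]) m ∧
    Lle (M := M) m (n ∘ tr M [a])

def condW0 (M : DFA A σ) (m : σ → σ) (c : A) : Prop := ¬ Jle (M := M) m (tr M [c])

def condW1 (M : DFA A σ) (m : σ → σ) (a : A) (n : σ → σ) (b : A) : Prop :=
  inT (M := M) n ∧ Jle (M := M) m (n ∘ tr M [a]) ∧ Jle (M := M) m (tr M [b] ∘ n) ∧
    ¬ Jle (M := M) m (tr M [b] ∘ (n ∘ tr M [a]))

theorem condU_strict (hnc : NPC M) {u₀ u₁ : List A} {a : A}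
    (h : condU M (tr M u₀) (tr M u₁) a) : mu M u₁ < mu M u₀ := by
  obtain ⟨-, hnR, hR1, hR2⟩ := h
  -- hR2 : m ≤_R a·n  hence  Jle m n  and  Rle m n
  obtain ⟨q, hq⟩ := hR2
  have hRmn : Rle (M := M) (tr M u₀) (tr M u₁) :=
    ⟨[a] ++ q, by rw [hq, tr_append]; rfl⟩
  have hJ : Jle (M := M) (tr M u₀) (tr M u₁) := hRmn.jle
  apply mu_lt hJ
  intro hJn
  exact hnR (R_lemma hnc hRmn hJn)

theorem condV_strict (hnc : NPC M) {u₀ u₁ : List A} {a : A}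
    (h : condV M (tr M u₀) a (tr M u₁)) : mu M u₁ < mu M u₀ := by
  obtain ⟨-, hnL, hL1, hL2⟩ := h
  obtain ⟨p, hp⟩ := hL2
  have hLmn : Lle (M := M) (tr M u₀) (tr M u₁) :=
    ⟨p ++ [a], by rw [hp, tr_append]; rfl⟩
  have hJ : Jle (M := M) (tr M u₀) (tr M u₁) := hLmn.jle
  apply mu_lt hJ
  intro hJn
  exact hnL (L_lemma hnc hLmn hJn)

theorem condW1_strict (hnc : NPC M) {u₀ u₁ : List A} {a b : A}
    (h : condW1 M (tr M u₀) a (tr M u₁) b) : mu M u₁ < mu M u₀ := by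
  obtain ⟨-, hJa, hJb, hJab⟩ := h
  have hJ : Jle (M := M) (tr M u₀) (tr M u₁) := by
    obtain ⟨p, q, hpq⟩ := hJa
    exact ⟨p ++ [a], q, by rw [hpq, tr_append]; rfl⟩
  apply mu_lt hJ
  intro hJn
  -- derive a contradiction with hJab
  apply hJab
  -- first : n R b·n
  have hR1 : Rle (M := M) (tr M [b] ∘ tr M u₁) (tr M u₁) := ⟨[b], rfl⟩
  have hJ2 : Jle (M := M) (tr M u₁) (tr M [b] ∘ tr M u₁) := Jle_trans hJn hJb
  obtain ⟨t, ht⟩ := R_lemma hnc hR1 hJ2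
  -- ht : tr u₁ = tr t ∘ (tr [b] ∘ tr u₁)
  obtain ⟨p, q, hpq⟩ := hJa
  refine ⟨p, t ++ q, ?_⟩
  calc tr M u₀ = tr M q ∘ (tr M u₁ ∘ tr M [a]) ∘ tr M p := hpq
    _ = tr M q ∘ ((tr M t ∘ (tr M [b] ∘ tr M u₁)) ∘ tr M [a]) ∘ tr M p := by rw [← ht]
    _ = tr M (t ++ q) ∘ (tr M [b] ∘ (tr M u₁ ∘ tr M [a])) ∘ tr M p := by
        rw [tr_append]; rfl

end SFaux

namespace SFaux
variable {A σ : Type*} [Fintype A] [Fintype σ] {M : DFA A σ}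

theorem take_succ_eq (w : List A) (i : ℕ) (h : i < w.length) :
    w.take (i+1) = w.take i ++ [w[i]] := by
  rw [List.take_succ, List.getElem?_eq_getElem h]; rfl

theorem Jle_id (u₀ : List A) : Jle (M := M) (tr M u₀) id :=
  ⟨u₀, [], by rw [tr_nil]; rfl⟩

theorem exists_min {P : ℕ → Prop} (h : ∃ n, P n) : ∃ n, P n ∧ ∀ m < n, ¬ P m := by
  classical
  exact ⟨Nat.find h, Nat.find_spec h, fun m hm => Nat.find_min h hm⟩

open Classical in
/-- The Schützenberger decomposition of `h⁻¹(m)` for `m` not `J`-above the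
identity. -/
theorem formula (hnc : NPC M) (u₀ : List A)
    (hB : ¬ ∃ p q : List A, tr M (p ++ u₀ ++ q) = id) :
    {w : List A | tr M w = tr M u₀} =
      ((⋃ p : (σ → σ) × A,
          if condU M (tr M u₀) p.1 p.2 then LU {w | tr M w = p.1} p.2 else ⊥) ⊓
       (⋃ p : A × (σ → σ),
          if condV M (tr M u₀) p.1 p.2 then LV p.1 {w | tr M w = p.2} else ⊥)) \
      ((⋃ c : A, if condW0 M (tr M u₀) c then LC c else ⊥) ⊔
       (⋃ p : A × (σ → σ) × A,
          if condW1 M (tr M u₀) p.1 p.2.1 p.2.2 then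
            LW p.1 {w | tr M w = p.2.1} p.2.2 else ⊥)) := by
  have hnRid : ¬ Rle (M := M) id (tr M u₀) := by
    rintro ⟨q, hq⟩
    exact hB ⟨[], q, by
      rw [show ([] : List A) ++ u₀ ++ q = u₀ ++ q by simp, tr_append, ← hq]⟩
  have hnLid : ¬ Lle (M := M) id (tr M u₀) := by
    rintro ⟨p, hp⟩
    exact hB ⟨p, [], by
      rw [show p ++ u₀ ++ ([] : List A) = p ++ u₀ by simp, tr_append, ← hp]⟩
  ext w
  simp only [Set.mem_setOf_eq, Set.mem_diff]
  constructor
  · -- ============ forward direction ============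
    intro hw
    refine ⟨⟨?_, ?_⟩, ?_⟩
    · -- w ∈ U : first prefix entering mT
      erw [mem_iUnion_ite]
      obtain ⟨i, hP, hPmin⟩ := exists_min
        (⟨w.length, by rw [List.take_length, hw]; exact Rle_refl M _⟩ :
          ∃ i, Rle (M := M) (tr M (w.take i)) (tr M u₀))
      have hi0 : i ≠ 0 := by
        intro h0
        apply hnRid
        rw [h0, List.take_zero, tr_nil] at hP
        exact hP
      obtain ⟨k, rfl⟩ : ∃ k, i = k + 1 := ⟨i - 1, by omega⟩
      have hile : k + 1 ≤ w.length := by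
        by_contra hc
        have h1 : w.length < k + 1 := by omega
        exact hPmin w.length h1 (by rw [List.take_length, hw]; exact Rle_refl M _)
      have hidx : k < w.length := by omega
      have hPm : ¬ Rle (M := M) (tr M (w.take k)) (tr M u₀) := hPmin k (by omega)
      have htake : w.take (k+1) = w.take k ++ [w[k]'hidx] := take_succ_eq w k hidx
      refine ⟨(tr M (w.take k), w[k]'hidx), ⟨⟨_, rfl⟩, hPm, ?_, ?_⟩, ?_⟩
      · rw [show tr M [w[k]'hidx] ∘ tr M (w.take k) = tr M (w.take (k+1)) by
          rw [htake, tr_append]]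
        exact hP
      · refine ⟨w.drop (k+1), ?_⟩
        rw [← hw]
        conv_lhs => rw [← List.take_append_drop (k+1) w]
        rw [tr_append, htake, tr_append]
      · erw [mem_LU]
        refine ⟨w.take k, w.drop (k+1), rfl, ?_⟩
        rw [← htake, List.take_append_drop]
    · -- w ∈ V : last suffix entering Tm
      erw [mem_iUnion_ite]
      obtain ⟨j, hQ, hQmin⟩ := exists_min
        (⟨w.length, by rw [List.drop_length, tr_nil]; exact hnLid⟩ :
          ∃ j, ¬ Lle (M := M) (tr M (w.drop j)) (tr M u₀))
      have hj0 : j ≠ 0 := by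
        intro h0
        apply hQ
        rw [h0, List.drop_zero, hw]
        exact Lle_refl M _
      obtain ⟨k, rfl⟩ : ∃ k, j = k + 1 := ⟨j - 1, by omega⟩
      have hQm : Lle (M := M) (tr M (w.drop k)) (tr M u₀) :=
        not_not.mp (hQmin k (by omega))
      have hjdx : k < w.length := by
        by_contra hc
        apply hnLid
        rw [List.drop_eq_nil_of_le (by omega), tr_nil] at hQm
        exact hQm
      have hdrop : w.drop k = [w[k]'hjdx] ++ w.drop (k+1) :=
        List.drop_eq_getElem_cons hjdx
      refine ⟨(w[k]'hjdx, tr M (w.drop (k+1))), ⟨⟨_, rfl⟩, hQ, ?_, ?_⟩, ?_⟩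
      · rw [show tr M (w.drop (k+1)) ∘ tr M [w[k]'hjdx] = tr M (w.drop k) by
          rw [hdrop, tr_append]]
        exact hQm
      · refine ⟨w.take k, ?_⟩
        rw [← hw]
        conv_lhs => rw [← List.take_append_drop k w]
        rw [tr_append, hdrop, tr_append]
      · erw [mem_LV]
        refine ⟨w.take k, w.drop (k+1), rfl, ?_⟩
        rw [List.append_assoc, ← hdrop, List.take_append_drop]
    · -- w ∉ W
      rintro (hmem | hmem)
      · erw [mem_iUnion_ite] at hmem
        obtain ⟨c, hc, hw2⟩ := hmem
        obtain ⟨x, y, rfl⟩ := mem_LC.mp hw2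
        exact hc ⟨x, y, by rw [← hw, tr_append3]⟩
      · erw [mem_iUnion_ite] at hmem
        obtain ⟨⟨a, n, b⟩, ⟨hinT, hJa, hJb, hJab⟩, hw2⟩ := hmem
        obtain ⟨x, mid, y, hmid, hweq⟩ := mem_LW.mp hw2
        apply hJab
        refine ⟨x, y, ?_⟩
        rw [← hw, hweq, ← hmid]
        rw [show x ++ [a] ++ mid ++ [b] ++ y = x ++ ([a] ++ mid ++ [b]) ++ y by
          simp [List.append_assoc]]
        rw [tr_append3, tr_append3]
  · -- ============ backward direction ============
    rintro ⟨⟨hU, hV⟩, hW⟩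
    erw [mem_iUnion_ite] at hU hV
    obtain ⟨⟨n, a⟩, ⟨hinT, hnR, hR1, hR2⟩, hwU⟩ := hU
    obtain ⟨x, y, hx, hwxy⟩ := mem_LU.mp hwU
    obtain ⟨⟨b, n2⟩, ⟨hinT2, hnL, hL1, hL2⟩, hwV⟩ := hV
    obtain ⟨x2, y2, hy2, hwxy2⟩ := mem_LV.mp hwV
    -- (1) tr w ≤_R m
    have hRw : Rle (M := M) (tr M w) (tr M u₀) := by
      obtain ⟨t, ht⟩ := hR1
      refine ⟨t ++ y, ?_⟩
      rw [hwxy, tr_append3, hx, ht, tr_append]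
      rfl
    -- (2) tr w ≤_L m
    have hLw : Lle (M := M) (tr M w) (tr M u₀) := by
      obtain ⟨s, hs⟩ := hL1
      refine ⟨x2 ++ s, ?_⟩
      rw [hwxy2, tr_append3, hy2]
      rw [show tr M (x2 ++ s) = tr M s ∘ tr M x2 from tr_append M x2 s]
      rw [show n2 ∘ tr M [b] ∘ tr M x2 = (n2 ∘ tr M [b]) ∘ tr M x2 from rfl, hs]
      rfl
    -- (3) m ≤_J tr w   (the factor argument)
    have hJw : Jle (M := M) (tr M u₀) (tr M w) := by
      by_contra hnJ
      obtain ⟨l, ⟨i, hil, hbad⟩, hminl⟩ := exists_min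
        (⟨w.length, 0, by simp, by simpa using hnJ⟩ :
          ∃ l, ∃ i, i + l ≤ w.length ∧
            ¬ Jle (M := M) (tr M u₀) (tr M ((w.drop i).take l)))
      have hl0 : l ≠ 0 := by
        intro h0
        apply hbad
        rw [h0, List.take_zero]
        exact Jle_id u₀
      have hl1 : l ≠ 1 := by
        intro h1
        have hiw : i < w.length := by omega
        have hone : (w.drop i).take 1 = [w[i]'hiw] := by
          rw [List.drop_eq_getElem_cons hiw]
          rfl
        apply hW
        left
        erw [mem_iUnion_ite]
        refine ⟨w[i]'hiw, ?_, ?_⟩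
        · intro hJ
          apply hbad
          rw [h1, hone]
          exact hJ
        · rw [mem_LC]
          refine ⟨w.take i, w.drop (i+1), ?_⟩
          rw [List.append_assoc, show [w[i]'hiw] ++ w.drop (i+1) = w.drop i from
            (List.drop_eq_getElem_cons hiw).symm, List.take_append_drop]
      obtain ⟨L2, rfl⟩ : ∃ t, l = t + 2 := ⟨l - 2, by omega⟩
      have hiw : i < w.length := by omega
      have hbw : i + (L2 + 2) - 1 < w.length := by omega
      have hmid2 : L2 < (w.drop (i+1)).length := by
        rw [List.length_drop]; omega
      have e1 : (w.drop i).take (L2 + 1) = w[i]'hiw :: (w.drop (i+1)).take L2 := by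
        rw [List.drop_eq_getElem_cons hiw, List.take_succ_cons]
      have egetb : (w.drop (i+1))[L2]'hmid2 = w[i + (L2 + 2) - 1]'hbw := by
        rw [List.getElem_drop]
        congr 1
        omega
      have e2 : (w.drop (i+1)).take (L2 + 1) =
          (w.drop (i+1)).take L2 ++ [w[i + (L2 + 2) - 1]'hbw] := by
        rw [take_succ_eq _ _ hmid2, egetb]
      have e3 : (w.drop i).take (L2 + 2) =
          w[i]'hiw :: ((w.drop (i+1)).take L2 ++ [w[i + (L2 + 2) - 1]'hbw]) := by
        rw [List.drop_eq_getElem_cons hiw, List.take_succ_cons, e2]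
      have good1 : Jle (M := M) (tr M u₀) (tr M ((w.drop i).take (L2 + 1))) := by
        have := hminl (L2 + 1) (by omega)
        push_neg at this
        exact this i (by omega)
      have good2 : Jle (M := M) (tr M u₀) (tr M ((w.drop (i+1)).take (L2 + 1))) := by
        have := hminl (L2 + 1) (by omega)
        push_neg at this
        exact this (i+1) (by omega)
      apply hW
      right
      erw [mem_iUnion_ite]
      refine ⟨(w[i]'hiw, tr M ((w.drop (i+1)).take L2), w[i + (L2 + 2) - 1]'hbw),
        ⟨⟨_, rfl⟩, ?_, ?_, ?_⟩, ?_⟩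
      · rw [e1] at good1
        rw [show (w[i]'hiw :: (w.drop (i+1)).take L2 : List A)
            = [w[i]'hiw] ++ (w.drop (i+1)).take L2 from rfl, tr_append] at good1
        exact good1
      · rw [e2, tr_append] at good2
        exact good2
      · intro hJ
        apply hbad
        rw [e3, show (w[i]'hiw :: ((w.drop (i+1)).take L2 ++ [w[i + (L2 + 2) - 1]'hbw]) : List A)
            = [w[i]'hiw] ++ (w.drop (i+1)).take L2 ++ [w[i + (L2 + 2) - 1]'hbw] by simp,
          tr_append3]
        exact hJ
      · erw [mem_LW]
        refine ⟨w.take i, (w.drop (i+1)).take L2, w.drop (i + (L2 + 2)), rfl, ?_⟩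
        conv_lhs => rw [← List.take_append_drop i w,
          ← List.take_append_drop (L2 + 2) (w.drop i), List.drop_drop, e3]
        simp only [List.append_assoc, List.singleton_append, List.cons_append, List.nil_append]
    -- (4) conclude
    obtain ⟨e, he⟩ := R_lemma hnc hRw hJw
    obtain ⟨d, hd⟩ := hLw
    have hsand : tr M u₀ = tr M e ∘ tr M u₀ ∘ tr M d := by
      rw [show tr M e ∘ tr M u₀ ∘ tr M d = tr M e ∘ (tr M u₀ ∘ tr M d) from rfl, ← hd]
      exact he
    have hfin := (sandwich hnc hsand).1
    rw [hd, ← hfin]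

end SFaux

namespace SFaux
variable {A σ : Type*} [Fintype A] [Fintype σ] {M : DFA A σ}

open Classical in
theorem main (hnc : NPC M) : ∀ (k : ℕ) (u₀ : List A), mu M u₀ ≤ k →
    StarFree {w : List A | tr M w = tr M u₀} := by
  intro k
  induction k with
  | zero =>
    intro u₀ h
    apply caseA hnc
    by_contra hB
    have hmem : id ∈ Set.range (tr M) \ {x : σ → σ | Jle (M := M) x (tr M u₀)} := by
      refine ⟨⟨[], tr_nil M⟩, ?_⟩
      rintro ⟨p, q, hpq⟩
      exact hB ⟨p, q, by rw [tr_append3, ← hpq]⟩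
    have hfin : (Set.range (tr M) \ {x : σ → σ | Jle (M := M) x (tr M u₀)}).Finite :=
      Set.toFinite _
    have h0 : mu M u₀ = 0 := by omega
    rw [mu, Set.ncard_eq_zero hfin] at h0
    rw [h0] at hmem
    exact hmem
  | succ k ih =>
    intro u₀ h
    by_cases hA : ∃ p q : List A, tr M (p ++ u₀ ++ q) = id
    · exact caseA hnc u₀ hA
    · rw [formula hnc u₀ hA]
      apply sf_sdiff
      · apply StarFree.inter
        · apply sf_iUnion_ite
          rintro ⟨n, a⟩ hc
          obtain ⟨u₁, rfl⟩ := hc.1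
          apply sf_LU
          have := condU_strict hnc hc
          exact ih u₁ (by omega)
        · apply sf_iUnion_ite
          rintro ⟨a, n⟩ hc
          obtain ⟨u₁, rfl⟩ := hc.1
          apply sf_LV
          have := condV_strict hnc hc
          exact ih u₁ (by omega)
      · apply StarFree.union
        · exact sf_iUnion_ite _ _ fun c _ => sf_LC c
        · apply sf_iUnion_ite
          rintro ⟨a, n, b⟩ hc
          obtain ⟨u₁, rfl⟩ := hc.1
          apply sf_LW
          have := condW1_strict hnc hc
          exact ih u₁ (by omega)

open Classical in
theorem part2 (M : DFA A σ) (L : Language A) (hacc : M.accepts = L) (hnc : NPC M) :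
    StarFree L := by
  have hdec : L = ⋃ f : σ → σ,
      if inT (M := M) f ∧ f M.start ∈ M.accept then {w : List A | tr M w = f} else ⊥ := by
    ext w
    erw [mem_iUnion_ite]
    constructor
    · intro hwL
      refine ⟨tr M w, ⟨⟨w, rfl⟩, ?_⟩, rfl⟩
      rw [← hacc] at hwL
      exact (DFA.mem_accepts M).mp hwL
    · rintro ⟨f, ⟨hinT, hf⟩, hwf⟩
      rw [← hacc]
      apply (DFA.mem_accepts M).mpr
      show tr M w M.start ∈ M.accept
      erw [Set.mem_setOf_eq] at hwf
      rw [hwf]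
      exact hf
  rw [hdec]
  apply sf_iUnion_ite
  rintro f ⟨⟨u₁, rfl⟩, -⟩
  exact main hnc (mu M u₁) u₁ le_rfl

end SFaux

/-- A regular language is star-free iff its minimal automaton (a complete DFA
with all states reachable and with pairwise distinct futures) has no powered
circuits: no state `s`, nonempty word `v` and `k > 1` with `s^{v^k} = s` but
`s^v ≠ s^{v²}`. -/
theorem stmt15 {A σ : Type*} [Fintype A] [Fintype σ] (M : DFA A σ)
    (L : Language A) (hacc : M.accepts = L)
    (hreach : ∀ s : σ, ∃ w : List A, M.evalFrom M.start w = s)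
    (hmin : ∀ s t : σ,
      (∀ w : List A, M.evalFrom s w ∈ M.accept ↔ M.evalFrom t w ∈ M.accept) →
        s = t) :
    StarFree L ↔
      ¬ ∃ (s : σ) (v : List A) (k : ℕ), v ≠ [] ∧ 1 < k ∧
        M.evalFrom s (wpow v k) = s ∧
        M.evalFrom s v ≠ M.evalFrom s (wpow v 2) := by
  constructor
  · exact SFaux.part1 M L hacc hreach hmin
  · intro hnc
    exact SFaux.part2 M L hacc hnc
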